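/- Let (P, L) be an intersecting r-uniform linear system with r ≥ 4 an even integer. If τ > (r + 2)/2, then ν₂ ≤ r. -/

import Mathlib

open Finset

variable {P : Type*} [Fintype P] [DecidableEq P]

/-- `T` is a transversal of the set system `L`: it meets every member of `L`. -/
def IsTransversal (L : Finset (Finset P)) (T : Finset P) : Prop :=
  ∀ ℓ ∈ L, (T ∩ ℓ).Nonempty

/-- The transversal number τ: minimum size of a transversal. -/
noncomputable def tau (L : Finset (Finset P)) : ℕ :=
  sInf {n | ∃ T : Finset P, T.card = n ∧ IsTransversal L T}

/-- `M` is a matching of `L`: a pairwise disjoint subfamily. -/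
def IsMatching (L M : Finset (Finset P)) : Prop :=
  M ⊆ L ∧ ∀ a ∈ M, ∀ b ∈ M, a ≠ b → a ∩ b = ∅

/-- The matching number ν: maximum size of a matching. -/
noncomputable def matchingNumber (L : Finset (Finset P)) : ℕ :=
  sSup {n | ∃ M : Finset (Finset P), IsMatching L M ∧ M.card = n}

/-- `R` is a 2-packing of `L`: no three distinct members share a common point. -/
def IsTwoPacking (L R : Finset (Finset P)) : Prop :=
  R ⊆ L ∧ ∀ a ∈ R, ∀ b ∈ R, ∀ c ∈ R, a ≠ b → a ≠ c → b ≠ c → a ∩ b ∩ c = ∅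

/-- The 2-packing number ν₂. -/
noncomputable def nu2 (L : Finset (Finset P)) : ℕ :=
  sSup {n | ∃ R : Finset (Finset P), IsTwoPacking L R ∧ R.card = n}

/-- A linear system: two distinct lines share at most one point. -/
def Linear (L : Finset (Finset P)) : Prop :=
  ∀ a ∈ L, ∀ b ∈ L, a ≠ b → (a ∩ b).card ≤ 1

/-- Intersecting: every two lines meet. -/
def Intersecting (L : Finset (Finset P)) : Prop :=
  ∀ a ∈ L, ∀ b ∈ L, (a ∩ b).Nonempty

/-- `r`-uniform: every line has exactly `r` points. -/
def Uniform (L : Finset (Finset P)) (r : ℕ) : Prop :=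
  ∀ ℓ ∈ L, ℓ.card = r

/-- `r`-partite: the points partition into `r` sides, each meeting every line exactly once. -/
def Partite (L : Finset (Finset P)) (r : ℕ) : Prop :=
  ∃ X : Fin r → Finset P, (∀ p : P, ∃! i, p ∈ X i) ∧
    ∀ ℓ ∈ L, ∀ i, (ℓ ∩ X i).card = 1

/-- The degree of a point: the number of lines through it. -/
def deg (L : Finset (Finset P)) (p : P) : ℕ :=
  (L.filter (fun ℓ => p ∈ ℓ)).card


noncomputable def pickPt (s : Finset P) (d : P) : P :=
  if h : s.Nonempty then h.choose else d

lemma pickPt_mem {s : Finset P} (h : s.Nonempty) (d : P) : pickPt s d ∈ s := by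
  rw [pickPt, dif_pos h]; exact h.choose_spec

lemma exists_small_transversal (M : Finset (Finset P))
    (hne : ∀ a ∈ M, a.Nonempty)
    (hm : ∀ a ∈ M, ∀ b ∈ M, (a ∩ b).Nonempty) :
    ∃ T : Finset P, IsTransversal M T ∧ T.card ≤ (M.card + 1) / 2 := by
  induction M using Finset.strongInductionOn with
  | _ M ih =>
  rcases M.eq_empty_or_nonempty with rfl | ⟨a, ha⟩
  · exact ⟨∅, fun ℓ h => absurd h (Finset.notMem_empty ℓ), by simp⟩
  rcases (M.erase a).eq_empty_or_nonempty with he | ⟨b, hb⟩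
  · obtain ⟨p, hp⟩ := hne a ha
    refine ⟨{p}, ?_, by
      have := Finset.card_pos.mpr ⟨a, ha⟩
      simp only [Finset.card_singleton]; omega⟩
    intro ℓ hℓ
    have hla : ℓ = a := by
      by_contra hne'
      exact (Finset.notMem_empty ℓ) (he ▸ Finset.mem_erase.mpr ⟨hne', hℓ⟩)
    exact ⟨p, Finset.mem_inter.mpr ⟨Finset.mem_singleton_self p, hla ▸ hp⟩⟩
  · have hbM : b ∈ M := Finset.mem_of_mem_erase hb
    have hba : b ≠ a := Finset.ne_of_mem_erase hb
    obtain ⟨p, hp0⟩ := hm a ha b hbM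
    have hp := Finset.mem_inter.mp hp0
    set M' := (M.erase a).erase b with hM'def
    have hsub : M' ⊆ M := fun x hx => Finset.mem_of_mem_erase (Finset.mem_of_mem_erase hx)
    have hss : M' ⊂ M :=
      Finset.ssubset_of_subset_of_ssubset (Finset.erase_subset _ _) (Finset.erase_ssubset ha)
    obtain ⟨T, hT, hTc⟩ := ih M' hss (fun x hx => hne x (hsub hx))
      (fun x hx y hy => hm x (hsub hx) y (hsub hy))
    refine ⟨insert p T, ?_, ?_⟩
    · intro ℓ hℓ
      by_cases h1 : ℓ = a
      · exact ⟨p, Finset.mem_inter.mpr ⟨Finset.mem_insert_self _ _, h1 ▸ hp.1⟩⟩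
      by_cases h2 : ℓ = b
      · exact ⟨p, Finset.mem_inter.mpr ⟨Finset.mem_insert_self _ _, h2 ▸ hp.2⟩⟩
      · obtain ⟨q, hq⟩ := hT ℓ (Finset.mem_erase.mpr ⟨h2, Finset.mem_erase.mpr ⟨h1, hℓ⟩⟩)
        rw [Finset.mem_inter] at hq
        exact ⟨q, Finset.mem_inter.mpr ⟨Finset.mem_insert_of_mem hq.1, hq.2⟩⟩
    · have hM'c : M'.card = M.card - 2 := by
        rw [hM'def, Finset.card_erase_of_mem hb, Finset.card_erase_of_mem ha]; omega
      have h2le : 2 ≤ M.card := Finset.one_lt_card.mpr ⟨a, ha, b, hbM, hba.symm⟩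
      have := Finset.card_insert_le p T
      omega

theorem stmt7 (r : ℕ) (hr : 4 ≤ r) (heven : Even r) (L : Finset (Finset P))
    (hlin : Linear L) (hint : Intersecting L) (hunif : Uniform L r)
    (htau : (r + 2) / 2 < tau L) :
    nu2 L ≤ r := by
  by_contra hcon
  push_neg at hcon
  have hmem : nu2 L ∈ {n | ∃ R : Finset (Finset P), IsTwoPacking L R ∧ R.card = n} := by
    apply Nat.sSup_mem
    · exact ⟨0, ∅, ⟨Finset.empty_subset L,
        fun a ha => absurd ha (Finset.notMem_empty a)⟩, Finset.card_empty⟩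
    · exact ⟨L.card, fun n hn => by
        obtain ⟨R, hR, hc⟩ := hn; exact hc ▸ Finset.card_le_card hR.1⟩
  obtain ⟨R0, hR0, hc0⟩ := hmem
  have hle : r + 1 ≤ R0.card := by omega
  obtain ⟨R, hRsub, hRcard⟩ := Finset.exists_subset_card_eq hle
  have hRL : R ⊆ L := hRsub.trans hR0.1
  have hpack : ∀ a ∈ R, ∀ b ∈ R, ∀ c ∈ R, a ≠ b → a ≠ c → b ≠ c → a ∩ b ∩ c = ∅ :=
    fun a ha b hb c hc => hR0.2 a (hRsub ha) b (hRsub hb) c (hRsub hc)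
  -- Claim 1: every point of a line of R lies on another line of R
  have claim1 : ∀ a ∈ R, ∀ p ∈ a, ∃ b ∈ R, b ≠ a ∧ p ∈ b := by
    intro a haR p hpa
    set s := a.filter (fun q => ∃ b ∈ R, b ≠ a ∧ q ∈ b) with hs
    have hmap : ∀ b ∈ R.erase a, pickPt (a ∩ b) p ∈ s := by
      intro b hbb
      have hbR : b ∈ R := Finset.mem_of_mem_erase hbb
      have hne : (a ∩ b).Nonempty := hint a (hRL haR) b (hRL hbR)
      have hmem := pickPt_mem hne p
      rw [Finset.mem_inter] at hmem
      exact Finset.mem_filter.mpr ⟨hmem.1, b, hbR, Finset.ne_of_mem_erase hbb, hmem.2⟩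
    have hinj : Set.InjOn (fun b => pickPt (a ∩ b) p) (R.erase a) := by
      intro b1 h1 b2 h2 heq
      by_contra hne12
      have hb1m : b1 ∈ R.erase a := h1
      have hb2m : b2 ∈ R.erase a := h2
      have hb1 : b1 ∈ R := Finset.mem_of_mem_erase hb1m
      have hb2 : b2 ∈ R := Finset.mem_of_mem_erase hb2m
      have hq1 := pickPt_mem (hint a (hRL haR) b1 (hRL hb1)) p
      have hq2 := pickPt_mem (hint a (hRL haR) b2 (hRL hb2)) p
      rw [Finset.mem_inter] at hq1 hq2
      have hab1 : a ≠ b1 := (Finset.ne_of_mem_erase hb1m).symm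
      have hab2 : a ≠ b2 := (Finset.ne_of_mem_erase hb2m).symm
      have hempty := hpack a haR b1 hb1 b2 hb2 hab1 hab2 hne12
      have heq' : pickPt (a ∩ b1) p = pickPt (a ∩ b2) p := heq
      have hmm : pickPt (a ∩ b1) p ∈ a ∩ b1 ∩ b2 := by
        rw [Finset.mem_inter, Finset.mem_inter]
        exact ⟨⟨hq1.1, hq1.2⟩, heq' ▸ hq2.2⟩
      rw [hempty] at hmm
      exact Finset.notMem_empty _ hmm
    have hcard1 : (R.erase a).card ≤ s.card :=
      Finset.card_le_card_of_injOn _ hmap hinj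
    have hcarda : a.card = r := hunif a (hRL haR)
    have hcardRe : (R.erase a).card = r := by
      rw [Finset.card_erase_of_mem haR, hRcard]; omega
    have hseq : s = a := by
      apply Finset.eq_of_subset_of_card_le (Finset.filter_subset _ _)
      rw [← hs]; omega
    have hps : p ∈ s := hseq ▸ hpa
    exact (Finset.mem_filter.mp hps).2
  -- Claim 2: every line of L belongs to R
  have hLR : L ⊆ R := by
    intro ℓ hℓ
    by_contra hℓR
    have h1 : ∀ a ∈ R, (ℓ ∩ a).card = 1 := by
      intro a haR
      have hnea : ℓ ≠ a := fun h => hℓR (h ▸ haR)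
      have hle1 := hlin ℓ hℓ a (hRL haR) hnea
      have hposi := Finset.card_pos.mpr (hint ℓ hℓ a (hRL haR))
      omega
    have hsum : ∑ a ∈ R, (ℓ ∩ a).card = r + 1 := by
      rw [Finset.sum_congr rfl h1, Finset.sum_const, smul_eq_mul, mul_one, hRcard]
    have hswap : ∑ a ∈ R, (ℓ ∩ a).card
        = ∑ p ∈ ℓ, (R.filter (fun a => p ∈ a)).card := by
      have h2 : ∀ a ∈ R, (ℓ ∩ a).card = ∑ p ∈ ℓ, if p ∈ a then 1 else 0 := by
        intro a _
        rw [← Finset.filter_mem_eq_inter, Finset.card_filter]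
      rw [Finset.sum_congr rfl h2, Finset.sum_comm]
      refine Finset.sum_congr rfl fun p _ => ?_
      rw [Finset.card_filter]
    have hevloc : ∀ p ∈ ℓ, Even ((R.filter (fun a => p ∈ a)).card) := by
      intro p _
      set c := (R.filter (fun a => p ∈ a)).card with hc
      have hle2 : c ≤ 2 := by
        by_contra h3
        push_neg at h3
        obtain ⟨a, haf, b, hbf, cc, hcf, hab, hac, hbc⟩ := Finset.two_lt_card.mp h3
        obtain ⟨haR, hpa⟩ := Finset.mem_filter.mp haf
        obtain ⟨hbR, hpb⟩ := Finset.mem_filter.mp hbf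
        obtain ⟨hcR, hpc⟩ := Finset.mem_filter.mp hcf
        have hempty := hpack a haR b hbR cc hcR hab hac hbc
        have hmm : p ∈ a ∩ b ∩ cc := by
          rw [Finset.mem_inter, Finset.mem_inter]; exact ⟨⟨hpa, hpb⟩, hpc⟩
        rw [hempty] at hmm
        exact Finset.notMem_empty _ hmm
      have hne1 : c ≠ 1 := by
        intro hone
        rcases Finset.card_eq_one.mp hone with ⟨a, hfa⟩
        have haf : a ∈ R.filter (fun a => p ∈ a) := hfa ▸ Finset.mem_singleton_self a
        obtain ⟨haR, hpa⟩ := Finset.mem_filter.mp haf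
        obtain ⟨b, hbR, hbne, hpb⟩ := claim1 a haR p hpa
        have hbf : b ∈ R.filter (fun a => p ∈ a) := Finset.mem_filter.mpr ⟨hbR, hpb⟩
        rw [hfa] at hbf
        exact hbne (Finset.mem_singleton.mp hbf)
      have hcc : c = 0 ∨ c = 2 := by omega
      rcases hcc with h | h <;> rw [h] <;> decide
    have hevensum : Even (∑ p ∈ ℓ, (R.filter (fun a => p ∈ a)).card) :=
      Finset.even_sum (f := fun p => (R.filter (fun a => p ∈ a)).card) hevloc
    rw [← hswap, hsum] at hevensum
    obtain ⟨k, hk⟩ := heven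
    obtain ⟨m, hm⟩ := hevensum
    omega
  have hLcard : L.card ≤ r + 1 := hRcard ▸ Finset.card_le_card hLR
  obtain ⟨T, hT, hTc⟩ := exists_small_transversal L
    (fun a ha => Finset.card_pos.mp (by rw [hunif a ha]; omega)) hint
  have htle : tau L ≤ T.card := Nat.sInf_le ⟨T, rfl, hT⟩
  omega
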